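/- Let k, r ∈ ℕ, let M be a finite multiset of vectors in {0,1,□}^d with cover (R_M, T_M), and let M' ⊆ M \ R_M be nonempty such that the compatibility graph on M' with threshold r is connected. If there exist a completion M* of M (with witnessing bijection φ) and a partition of M* into at most k parts, each of diameter at most r, then γ(M') ≤ 2rk − r + |T_M|. -/

import Mathlib

open scoped Classical

/-- δ(a,b) for incomplete vectors: the number of coordinates on which
both entries are known and differ. -/
noncomputable def pdist {ι : Type} [Fintype ι] (a b : ι → Option Bool) : ℕ :=
  (Finset.univ.filter fun i => ∃ x y : Bool, a i = some x ∧ b i = some y ∧ x ≠ y).card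

/-- The compatibility graph on a finite set of incomplete vectors with threshold ρ. -/
def compatGraph {ι : Type} [Fintype ι] (S : Finset (ι → Option Bool)) (ρ : ℕ) :
    SimpleGraph {x // x ∈ S} :=
  SimpleGraph.fromRel fun a b => pdist a.1 b.1 ≤ ρ

/-- γ(S): the diameter (maximum pairwise δ) of a finite multiset of incomplete vectors. -/
noncomputable def mdiam {ι : Type} [Fintype ι] (S : Multiset (ι → Option Bool)) : ℕ :=
  (S.toFinset ×ˢ S.toFinset).sup fun p => pdist p.1 p.2

/-- `Mc` is a completion of `M`: a multiset of complete vectors in bijection with `M`,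
agreeing with the corresponding vectors on all non-missing entries. -/
def IsCompletion {ι : Type} (M : Multiset (ι → Option Bool))
    (Mc : Multiset (ι → Bool)) : Prop :=
  Multiset.Rel (fun a c => ∀ i (x : Bool), a i = some x → c i = x) M Mc

/-- The multiset `Mc` of complete vectors can be partitioned into at most `k` parts,
each of diameter at most `r`. -/
def HasDiamPartitionM {ι : Type} [Fintype ι] (Mc : Multiset (ι → Bool)) (k r : ℕ) : Prop :=
  ∃ P : Multiset (Multiset (ι → Bool)), Multiset.card P ≤ k ∧ P.join = Mc ∧
    ∀ p ∈ P, ∀ a ∈ p, ∀ b ∈ p, hammingDist a b ≤ r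

/-- Hamming distance outside a set T of coordinates. -/
noncomputable def dT {d : ℕ} (T : Finset (Fin d)) (x y : Fin d → Bool) : ℕ :=
  (Finset.univ.filter fun i => i ∉ T ∧ x i ≠ y i).card

lemma dT_triangle {d : ℕ} (T : Finset (Fin d)) (x y z : Fin d → Bool) :
    dT T x z ≤ dT T x y + dT T y z := by
  unfold dT
  refine le_trans (Finset.card_le_card ?_) (Finset.card_union_le _ _)
  intro i hi
  simp only [Finset.mem_filter, Finset.mem_union, Finset.mem_univ, true_and] at *
  by_cases h : x i = y i
  · exact Or.inr ⟨hi.1, h ▸ hi.2⟩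
  · exact Or.inl ⟨hi.1, h⟩

lemma dT_le_hamming {d : ℕ} (T : Finset (Fin d)) (x y : Fin d → Bool) :
    dT T x y ≤ hammingDist x y := by
  unfold dT hammingDist
  refine Finset.card_le_card ?_
  intro i hi
  simp only [Finset.mem_filter, Finset.mem_univ, true_and] at *
  exact hi.2

lemma pdist_comm {ι : Type} [Fintype ι] (a b : ι → Option Bool) :
    pdist a b = pdist b a := by
  unfold pdist
  congr 1
  apply Finset.filter_congr
  intro i _
  constructor
  · rintro ⟨x, y, h1, h2, h3⟩; exact ⟨y, x, h2, h1, h3.symm⟩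
  · rintro ⟨x, y, h1, h2, h3⟩; exact ⟨y, x, h2, h1, h3.symm⟩

theorem statement_4 {d : ℕ} (k r : ℕ)
    (M R : Multiset (Fin d → Option Bool)) (T : Finset (Fin d))
    (hRM : R ≤ M)
    (hcover : ∀ v ∈ M, ∀ i : Fin d, v i = none → v ∈ R ∨ i ∈ T)
    (M' : Multiset (Fin d → Option Bool))
    (hM'M : M' ≤ M) (hM'R : ∀ v ∈ M', v ∉ R) (hne : M' ≠ 0)
    (hconn : (compatGraph M'.toFinset r).Connected)
    (hsol : ∃ Mc : Multiset (Fin d → Bool), IsCompletion M Mc ∧ HasDiamPartitionM Mc k r) :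
    mdiam M' ≤ 2 * r * k - r + T.card := by
  obtain ⟨Mc, hcomp, P, hPk, hPjoin, hPdiam⟩ := hsol
  set G := compatGraph M'.toFinset r with hG
  -- every vector of M' is known outside T
  have hknown : ∀ v ∈ M', ∀ i : Fin d, i ∉ T → ∃ x : Bool, v i = some x := by
    intro v hv i hiT
    cases hvi : v i with
    | none =>
      rcases hcover v (Multiset.mem_of_le hM'M hv) i hvi with h | h
      · exact absurd h (hM'R v hv)
      · exact absurd h hiT
    | some x => exact ⟨x, rfl⟩
  -- choose completion and part for each element of M'
  have hd : ∀ v : {x // x ∈ M'.toFinset}, ∃ c p, p ∈ P ∧ c ∈ p ∧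
      ∀ i (x : Bool), v.1 i = some x → c i = x := by
    intro ⟨v, hv⟩
    obtain ⟨c, hcMc, hcv⟩ := Multiset.exists_mem_of_rel_of_mem hcomp
      (Multiset.mem_of_le hM'M (Multiset.mem_toFinset.mp hv))
    rw [← hPjoin, Multiset.mem_join] at hcMc
    obtain ⟨p, hpP, hcp⟩ := hcMc
    exact ⟨c, p, hpP, hcp, hcv⟩
  choose c pt hptP hcpt hc using hd
  -- the finset of used parts
  set Qf : Finset (Multiset (Fin d → Bool)) := Finset.univ.image pt with hQf
  have hmemQf : ∀ v, pt v ∈ Qf := fun v => Finset.mem_image_of_mem _ (Finset.mem_univ v)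
  set ptQ : {x // x ∈ M'.toFinset} → {q // q ∈ Qf} := fun v => ⟨pt v, hmemQf v⟩ with hptQ
  -- graph on used parts
  set H : SimpleGraph {q // q ∈ Qf} := SimpleGraph.fromRel
    (fun a b => ∃ u v, G.Adj u v ∧ pt u = a.1 ∧ pt v = b.1) with hH
  -- adjacency in G gives small pdist
  have adj_pdist : ∀ u v, G.Adj u v → pdist u.1 v.1 ≤ r := by
    intro u v huv
    rw [hG, compatGraph, SimpleGraph.fromRel_adj] at huv
    rcases huv.2 with h | h
    · exact h
    · rw [pdist_comm]; exact h
  -- pdist small implies dT of completions small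
  have key_edge : ∀ u v, pdist u.1 v.1 ≤ r → dT T (c u) (c v) ≤ r := by
    intro u v huv
    refine le_trans (le_trans (Finset.card_le_card ?_) le_rfl) (le_trans le_rfl huv)
    intro i hi
    simp only [Finset.mem_filter, Finset.mem_univ, true_and] at *
    obtain ⟨hiT, hne'⟩ := hi
    obtain ⟨x, hx⟩ := hknown u.1 (Multiset.mem_toFinset.mp u.2) i hiT
    obtain ⟨y, hy⟩ := hknown v.1 (Multiset.mem_toFinset.mp v.2) i hiT
    refine ⟨x, y, hx, hy, ?_⟩
    intro hxy
    apply hne'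
    rw [hc u i x hx, hc v i y hy, hxy]
  -- same part implies dT small
  have key_same : ∀ u v, pt u = pt v → dT T (c u) (c v) ≤ r := by
    intro u v h
    refine le_trans (dT_le_hamming _ _ _) ?_
    exact hPdiam (pt v) (hptP v) (c u) (h ▸ hcpt u) (c v) (hcpt v)
  -- connectivity transfers to H
  have reach : ∀ u v, G.Reachable u v → H.Reachable (ptQ u) (ptQ v) := by
    intro u v huv
    obtain ⟨w⟩ := huv
    induction w with
    | nil => exact SimpleGraph.Reachable.refl _
    | @cons a b v' h w ih =>
      refine SimpleGraph.Reachable.trans ?_ ih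
      by_cases hab : pt a = pt b
      · have : ptQ a = ptQ b := Subtype.ext hab
        rw [this]
      · refine SimpleGraph.Adj.reachable ?_
        rw [hH, SimpleGraph.fromRel_adj]
        exact ⟨fun hh => hab (congrArg Subtype.val hh), Or.inl ⟨a, b, h, rfl, rfl⟩⟩
  have Hpre : H.Preconnected := by
    rintro ⟨a, ha⟩ ⟨b, hb⟩
    rw [hQf] at ha hb
    obtain ⟨u, _, hu⟩ := Finset.mem_image.mp ha
    obtain ⟨v, _, hv⟩ := Finset.mem_image.mp hb
    have h1 : (⟨a, ha⟩ : {q // q ∈ Qf}) = ptQ u := Subtype.ext hu.symm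
    have h2 : (⟨b, hb⟩ : {q // q ∈ Qf}) = ptQ v := Subtype.ext hv.symm
    rw [h1, h2]
    exact reach u v (hconn.preconnected u v)
  -- bound along walks in H
  have walk_bound : ∀ (a b : {q // q ∈ Qf}) (w : H.Walk a b), ∀ u v,
      pt u = a.1 → pt v = b.1 → dT T (c u) (c v) ≤ (2 * w.length + 1) * r := by
    intro a b w
    induction w with
    | nil =>
      intro u v hu hv
      simp only [SimpleGraph.Walk.length_nil]
      refine le_trans (key_same u v (hu.trans hv.symm)) (by omega)
    | @cons a' b' v' h w ih =>
      intro u v hu hv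
      have hadj := h
      rw [hH, SimpleGraph.fromRel_adj] at hadj
      have step : ∃ x y, G.Adj x y ∧ pt x = a'.1 ∧ pt y = b'.1 := by
        rcases hadj.2 with ⟨x, y, hxy, h1, h2⟩ | ⟨x, y, hxy, h1, h2⟩
        · exact ⟨x, y, hxy, h1, h2⟩
        · exact ⟨y, x, hxy.symm, h2, h1⟩
      obtain ⟨x, y, hxy, h1, h2⟩ := step
      have b1 : dT T (c u) (c x) ≤ r := key_same u x (hu.trans h1.symm)
      have b2 : dT T (c x) (c y) ≤ r := key_edge x y (adj_pdist x y hxy)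
      have b3 : dT T (c y) (c v) ≤ (2 * w.length + 1) * r := ih y v h2 hv
      have tri : dT T (c u) (c v) ≤ dT T (c u) (c x) + dT T (c x) (c y) + dT T (c y) (c v) :=
        le_trans (dT_triangle T (c u) (c y) (c v) |>.trans
          (add_le_add_left (dT_triangle T (c u) (c x) (c y)) _)) le_rfl
      have : (2 * (SimpleGraph.Walk.cons h w).length + 1) * r
          = r + r + (2 * w.length + 1) * r := by
        simp [SimpleGraph.Walk.length_cons]; ring
      rw [this]
      exact le_trans tri (by omega)
  -- cardinality facts
  have hQfsub : Qf ⊆ P.toFinset := by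
    intro q hq
    rw [hQf] at hq
    obtain ⟨u, _, hu⟩ := Finset.mem_image.mp hq
    exact Multiset.mem_toFinset.mpr (hu ▸ hptP u)
  have hQfk : Qf.card ≤ k :=
    le_trans (Finset.card_le_card hQfsub) (le_trans (Multiset.toFinset_card_le P) hPk)
  have hM'ne : M'.toFinset.Nonempty := by
    obtain ⟨v, hv⟩ := Multiset.exists_mem_of_ne_zero hne
    exact ⟨v, Multiset.mem_toFinset.mpr hv⟩
  have hQfpos : 1 ≤ Qf.card := by
    obtain ⟨v, hv⟩ := hM'ne
    exact Finset.card_pos.mpr ⟨pt ⟨v, hv⟩, hmemQf ⟨v, hv⟩⟩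
  have hk1 : 1 ≤ k := le_trans hQfpos hQfk
  -- main bound for any pair in M'
  have main : ∀ u v : {x // x ∈ M'.toFinset}, dT T (c u) (c v) ≤ 2 * r * k - r := by
    intro u v
    obtain ⟨w⟩ := Hpre (ptQ u) (ptQ v)
    have hp := w.toPath.2
    have hlen : (w.toPath : H.Walk (ptQ u) (ptQ v)).length < Fintype.card {q // q ∈ Qf} :=
      hp.length_lt
    rw [Fintype.card_coe] at hlen
    have hb := walk_bound (ptQ u) (ptQ v) w.toPath u v rfl rfl
    have hlk : (w.toPath : H.Walk (ptQ u) (ptQ v)).length ≤ k - 1 := by omega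
    refine le_trans hb ?_
    have : (2 * (w.toPath : H.Walk (ptQ u) (ptQ v)).length + 1) * r ≤ (2 * k - 1) * r :=
      Nat.mul_le_mul_right r (by omega)
    refine le_trans this ?_
    have : (2 * k - 1) * r = 2 * r * k - r := by
      rw [Nat.sub_mul, one_mul]
      ring_nf
    omega
  -- pdist bound via dT
  have pd_bound : ∀ u v : {x // x ∈ M'.toFinset},
      pdist u.1 v.1 ≤ dT T (c u) (c v) + T.card := by
    intro u v
    refine le_trans ?_ (le_trans (Finset.card_union_le _ T) le_rfl)
    · refine le_trans (Finset.card_le_card ?_) le_rfl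
      intro i hi
      simp only [Finset.mem_filter, Finset.mem_univ, true_and, Finset.mem_union] at *
      obtain ⟨x, y, hx, hy, hxy⟩ := hi
      by_cases hiT : i ∈ T
      · exact Or.inr hiT
      · refine Or.inl ⟨hiT, ?_⟩
        rw [hc u i x hx, hc v i y hy]
        exact fun hh => hxy (by exact_mod_cast hh)
  -- conclude
  unfold mdiam
  apply Finset.sup_le
  rintro ⟨a, b⟩ hab
  rw [Finset.mem_product] at hab
  have ha := hab.1
  have hb := hab.2
  have := le_trans (pd_bound ⟨a, ha⟩ ⟨b, hb⟩)
    (add_le_add_left (main ⟨a, ha⟩ ⟨b, hb⟩) T.card)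
  exact this
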